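/- Consider a vertex cover instance on the complete set of possible graphs on vertex set V, |V| = n, and let M be a randomized algorithm that on every input graph outputs a vertex cover of that graph with probability 1. Suppose M satisfies ε-edge differential privacy for some finite ε > 0 (neighboring graphs differ in one edge). Then for every pair of distinct vertices u, v ∈ V and every input graph G, the output of M(G) contains u or v with probability 1. Consequently, M outputs at least n-1 vertices with probability 1 on every input. -/

import Mathlib

/-- `C` is a vertex cover of the graph with edge set `G`. -/
def IsVertexCover {V : Type*} (G : Finset (Sym2 V)) (C : Finset V) : Prop :=
  ∀ e ∈ G, ∃ v ∈ C, v ∈ e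

theorem stmt_17 {V : Type*} [Fintype V] [DecidableEq V]
    (M : Finset (Sym2 V) → PMF (Finset V)) (ε : ℝ)
    (hcorrect : ∀ G : Finset (Sym2 V),
      (M G).toOuterMeasure {C | IsVertexCover G C} = 1)
    (hDP : ∀ G₁ G₂ : Finset (Sym2 V), (symmDiff G₁ G₂).card = 1 →
      ∀ S : Set (Finset V),
        (M G₁).toOuterMeasure S ≤ ENNReal.ofReal (Real.exp ε) * (M G₂).toOuterMeasure S) :
    (∀ u v : V, u ≠ v → ∀ G : Finset (Sym2 V),
      (M G).toOuterMeasure {C | u ∈ C ∨ v ∈ C} = 1) ∧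
    (∀ G : Finset (Sym2 V),
      (M G).toOuterMeasure {C | Fintype.card V - 1 ≤ C.card} = 1) := by
  have key : ∀ u v : V, u ≠ v → ∀ G : Finset (Sym2 V),
      (M G).toOuterMeasure {C | u ∈ C ∨ v ∈ C} = 1 := by
    intro u v huv G
    set e : Sym2 V := s(u, v) with he
    set G' : Finset (Sym2 V) := insert e G with hG'
    -- support of M G' is contained in the event
    have hsupp' : (M G').support ⊆ {C | u ∈ C ∨ v ∈ C} := by
      have h1 := (PMF.toOuterMeasure_apply_eq_one_iff (M G')
        {C | IsVertexCover G' C}).mp (hcorrect G')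
      intro C hC
      have hvc : IsVertexCover G' C := h1 hC
      obtain ⟨w, hwC, hwe⟩ := hvc e (Finset.mem_insert_self e G)
      rcases Sym2.mem_iff.mp hwe with rfl | rfl
      · exact Or.inl hwC
      · exact Or.inr hwC
    have hzero' : (M G').toOuterMeasure {C | u ∈ C ∨ v ∈ C}ᶜ = 0 := by
      rw [PMF.toOuterMeasure_apply_eq_zero_iff]
      exact Set.disjoint_compl_right_iff_subset.mpr hsupp'
    have hzero : (M G).toOuterMeasure {C | u ∈ C ∨ v ∈ C}ᶜ = 0 := by
      by_cases heG : e ∈ G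
      · have : G' = G := Finset.insert_eq_self.mpr heG
        rwa [this] at hzero'
      · have hsd : (symmDiff G G').card = 1 := by
          have : symmDiff G G' = {e} := by
            ext x
            simp only [Finset.mem_symmDiff, hG', Finset.mem_insert, Finset.mem_singleton]
            constructor
            · rintro (⟨hx, hx2⟩ | ⟨hx, hx2⟩)
              · exact absurd (Or.inr hx) hx2
              · rcases hx with rfl | hx
                · rfl
                · exact absurd hx hx2
            · rintro rfl
              exact Or.inr ⟨Or.inl rfl, heG⟩
          rw [this, Finset.card_singleton]
        have := hDP G G' hsd {C | u ∈ C ∨ v ∈ C}ᶜ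
        rw [hzero', mul_zero] at this
        exact le_antisymm this zero_le
    rw [PMF.toOuterMeasure_apply_eq_one_iff]
    exact Set.disjoint_compl_right_iff_subset.mp
      ((PMF.toOuterMeasure_apply_eq_zero_iff _ _).mp hzero)
  refine ⟨key, fun G => ?_⟩
  rw [PMF.toOuterMeasure_apply_eq_one_iff]
  intro C hC
  -- every pair of distinct vertices has one in C, so Cᶜ has at most one element
  have hcompl : Cᶜ.card ≤ 1 := by
    rw [Finset.card_le_one]
    intro a ha b hb
    by_contra hab
    have := (PMF.toOuterMeasure_apply_eq_one_iff (M G)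
      {D | a ∈ D ∨ b ∈ D}).mp (key a b hab G) hC
    rcases this with h | h
    · exact (Finset.mem_compl.mp ha) h
    · exact (Finset.mem_compl.mp hb) h
  have hcard : C.card + Cᶜ.card = Fintype.card V := Finset.card_add_card_compl C
  simp only [Set.mem_setOf_eq]
  omega
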